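/- Let V = ℂ^{2^r} and for α ∈ ℝ let θ_r(α) ∈ V be the vector with entries e^{i|x|α} (x ∈ {0,1}^r, |x| the Hamming weight). Then for any T ⊆ ℝ/2πℤ of cardinality r+1 consisting of distinct classes, and any linear maps D₁, D₂ : V → ℂ^{2^n}: (∀α ∈ T, D₁θ_r(α) = D₂θ_r(α)) implies (∀α ∈ ℝ, D₁θ_r(α) = D₂θ_r(α)). -/

import Mathlib

open Real Complex

theorem finite_angle_case_reasoning (r n : ℕ)
    (θ : ℝ → ((Fin r → Bool) → ℂ))
    (hθ : ∀ (α : ℝ) (x : Fin r → Bool),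
      θ α x = Complex.exp (Complex.I * ((Finset.univ.filter fun i => x i = true).card : ℂ) * (α : ℂ)))
    (α : Fin (r + 1) → ℝ)
    (hdist : ∀ j k : Fin (r + 1), j ≠ k → ¬ ∃ m : ℤ, α j = α k + m * (2 * π))
    (D₁ D₂ : ((Fin r → Bool) → ℂ) →ₗ[ℂ] ((Fin n → Bool) → ℂ))
    (h : ∀ j : Fin (r + 1), D₁ (θ (α j)) = D₂ (θ (α j))) :
    ∀ β : ℝ, D₁ (θ β) = D₂ (θ β) := by
  intro β
  -- weight function
  set wt : (Fin r → Bool) → ℕ := fun x => (Finset.univ.filter fun i => x i = true).card with hwt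
  have hwtlt : ∀ x, wt x < r + 1 := by
    intro x
    have := Finset.card_filter_le (Finset.univ : Finset (Fin r)) (fun i => x i = true)
    simpa using Nat.lt_succ_of_le (by simpa using this)
  have hθpow : ∀ (γ : ℝ) (x : Fin r → Bool),
      θ γ x = Complex.exp (Complex.I * γ) ^ wt x := by
    intro γ x
    rw [hθ, ← Complex.exp_nat_mul]
    simp only [hwt]
    ring_nf
  set z : Fin (r + 1) → ℂ := fun j => Complex.exp (Complex.I * (α j)) with hz
  have hzinj : Function.Injective z := by
    intro j k hjk
    by_contra hne
    apply hdist j k hne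
    rw [hz] at hjk
    rw [Complex.exp_eq_exp_iff_exists_int] at hjk
    obtain ⟨m, hm⟩ := hjk
    refine ⟨m, ?_⟩
    have hI : (Complex.I) * (α j) = Complex.I * ((α k : ℂ) + m * (2 * π)) := by
      rw [hm]; ring
    have h2 := mul_left_cancel₀ Complex.I_ne_zero hI
    exact_mod_cast h2
  set M := Matrix.vandermonde z with hM
  have hdet : M.det ≠ 0 := by
    rw [hM, Matrix.det_vandermonde]
    refine Finset.prod_ne_zero_iff.2 fun i _ => Finset.prod_ne_zero_iff.2 fun j hj => ?_
    rw [sub_ne_zero]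
    intro e
    exact (Finset.mem_Ioi.mp hj).ne' (hzinj e)
  set w : Fin (r + 1) → ℂ := fun k => Complex.exp (Complex.I * β) ^ (k : ℕ) with hw
  set c := Matrix.vecMul w M⁻¹ with hc
  have hsolve : ∀ k : Fin (r + 1), w k = ∑ j, c j * z j ^ (k : ℕ) := by
    have hcm : Matrix.vecMul c M = w := by
      rw [hc, Matrix.vecMul_vecMul, Matrix.nonsing_inv_mul M (Ne.isUnit hdet), Matrix.vecMul_one]
    intro k
    have hk := congrFun hcm k
    simp only [Matrix.vecMul, dotProduct, hM, Matrix.vandermonde_apply] at hk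
    exact hk.symm
  have hspan : θ β = ∑ j, c j • θ (α j) := by
    funext x
    have hkey := hsolve ⟨wt x, hwtlt x⟩
    simp only [hw] at hkey
    calc θ β x = Complex.exp (Complex.I * β) ^ wt x := hθpow β x
      _ = ∑ j, c j * z j ^ wt x := hkey
      _ = ∑ j, c j * θ (α j) x := by
          refine Finset.sum_congr rfl fun j _ => ?_
          rw [hθpow (α j) x]
      _ = (∑ j, c j • θ (α j)) x := by
          simp [Finset.sum_apply, Pi.smul_apply, smul_eq_mul]
  rw [hspan, map_sum, map_sum]
  refine Finset.sum_congr rfl fun j _ => ?_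
  rw [map_smul, map_smul, h j]
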